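/- For every x ∈ ℓ^p_{q,r}(ℤ) and y ∈ h^{p'}_{q',r'}(ℤ), the pairing ∑_{m∈ℤ} x(m)y(m) converges absolutely and satisfies |∑_m x(m)y(m)| ≤ ‖x‖_{ℓ^p_{q,r}} ‖y‖_{h^{p'}_{q',r'}}. -/

import Mathlib

open scoped ENNReal
open Finset Function

noncomputable section

/-- The dyadic interval `I(j,k) = [2^j k, 2^j (k+1)) ∩ ℤ`. -/
def dyadicI (j : ℕ) (k : ℤ) : Finset ℤ :=
  Finset.Ico ((2 ^ j : ℤ) * k) ((2 ^ j : ℤ) * (k + 1))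

/-- The dyadic Bourgain–Morrey norm `‖x‖_{ℓ^p_{q,r}}`. -/
def BMnorm (p q r : ℝ) (x : ℤ → ℝ) : ℝ≥0∞ :=
  (∑' jk : ℕ × ℤ,
      ((2 : ℝ≥0∞) ^ jk.1) ^ (r * (1 / q - 1 / p)) *
        (∑ l ∈ dyadicI jk.1 jk.2, ENNReal.ofReal (|x l| ^ p)) ^ (r / p)) ^ (1 / r)

/-- The classical `ℓ^r` norm of a sequence on `ℤ`. -/
def lNorm (r : ℝ) (x : ℤ → ℝ) : ℝ≥0∞ :=
  (∑' k : ℤ, ENNReal.ofReal (|x k| ^ r)) ^ (1 / r)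

end

noncomputable section

/-- A `(q',p')`-block relative to the dyadic interval `I(j,k)`: a sequence supported
in `I(j,k)` whose `ℓ^{p'}` norm is at most `|I(j,k)|^{1/p' - 1/q'}`. -/
def IsBlock (p' q' : ℝ) (j : ℕ) (k : ℤ) (a : ℤ → ℝ) : Prop :=
  (∀ n : ℤ, n ∉ dyadicI j k → a n = 0) ∧
    (∑ l ∈ dyadicI j k, |a l| ^ p') ^ (1 / p') ≤ ((2 : ℝ) ^ j) ^ (1 / p' - 1 / q')

/-- The block space norm `‖y‖_{h^{p'}_{q',r'}}`: the infimum of `‖λ‖_{ℓ^{r'}}` over all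
representations `y = ∑_{(j,k)} λ_k^j a_k^j` (pointwise convergence) with each `a_k^j`
a `(q',p')`-block on `I(j,k)`. -/
def blockNorm (p' q' r' : ℝ) (y : ℤ → ℝ) : ℝ≥0∞ :=
  ⨅ (lam : ℕ × ℤ → ℝ) (a : ℕ × ℤ → ℤ → ℝ)
    (_ : ∀ jk : ℕ × ℤ, IsBlock p' q' jk.1 jk.2 (a jk))
    (_ : ∀ n : ℤ, HasSum (fun jk : ℕ × ℤ => lam jk * a jk n) (y n)),
    (∑' jk : ℕ × ℤ, ENNReal.ofReal (|lam jk| ^ r')) ^ (1 / r')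

end

section Aux

/-- From `1/r + 1/r' = 1` and `1 < r`, deduce `1 < r'`. -/
lemma aux_conj_gt_one {r r' : ℝ} (hr : 1 < r) (hr' : 1 / r + 1 / r' = 1) : 1 < r' := by
  have hr0 : (0 : ℝ) < r := by linarith
  have h2 : 1 / r < 1 := (div_lt_one hr0).mpr hr
  have h1 : 0 < 1 / r' := by linarith
  have hr'0 : 0 < r' := one_div_pos.mp h1
  have h0 : 0 < 1 / r := one_div_pos.mpr hr0
  exact (div_lt_one hr'0).mp (by linarith)

/-- Hölder's inequality for `tsum` in `ℝ≥0∞`. -/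
lemma aux_tsum_holder {ι : Type*} {p q : ℝ} (hpq : Real.HolderConjugate p q)
    (f g : ι → ℝ≥0∞) :
    ∑' i, f i * g i ≤ (∑' i, f i ^ p) ^ (1 / p) * (∑' i, g i ^ q) ^ (1 / q) := by
  rw [ENNReal.tsum_eq_iSup_sum]
  refine iSup_le fun s => ?_
  refine (ENNReal.inner_le_Lp_mul_Lq s f g hpq).trans ?_
  exact mul_le_mul'
    (ENNReal.rpow_le_rpow (ENNReal.sum_le_tsum s) hpq.one_div_nonneg)
    (ENNReal.rpow_le_rpow (ENNReal.sum_le_tsum s) hpq.symm.one_div_nonneg)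

/-- Pairing of `x` against a single block. -/
lemma aux_block_pairing {p q p' q' : ℝ} (hp : 1 < p) (hpq : p < q)
    (hp' : 1 / p + 1 / p' = 1) (hq' : 1 / q + 1 / q' = 1)
    (x : ℤ → ℝ) (j : ℕ) (k : ℤ) (a : ℤ → ℝ) (ha : IsBlock p' q' j k a) :
    (∑' m : ℤ, ENNReal.ofReal (|x m| * |a m|)) ≤
      ((2 : ℝ≥0∞) ^ j) ^ (1 / q - 1 / p) *
        (∑ l ∈ dyadicI j k, ENNReal.ofReal (|x l| ^ p)) ^ (1 / p) := by
  have hp0 : (0 : ℝ) < p := by linarith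
  have hp'1 : 1 < p' := aux_conj_gt_one hp hp'
  have hconj : p.HolderConjugate p' := Real.holderConjugate_iff.mpr ⟨hp, by rw [← one_div p, ← one_div p']; linarith⟩
  rw [tsum_eq_sum (s := dyadicI j k) (fun m hm => by simp [ha.1 m hm])]
  rw [← ENNReal.ofReal_sum_of_nonneg (fun i _ => by positivity)]
  have hreal : ∑ l ∈ dyadicI j k, |x l| * |a l| ≤
      (∑ l ∈ dyadicI j k, |x l| ^ p) ^ (1 / p) * ((2 : ℝ) ^ j) ^ (1 / q - 1 / p) := by
    have h1 := Real.inner_le_Lp_mul_Lq (dyadicI j k) (fun l => |x l|) (fun l => |a l|) hconj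
    simp only [abs_abs] at h1
    refine h1.trans ?_
    have h2 : (∑ l ∈ dyadicI j k, |a l| ^ p') ^ (1 / p') ≤ ((2 : ℝ) ^ j) ^ (1 / q - 1 / p) := by
      have h3 := ha.2
      rwa [show 1 / p' - 1 / q' = 1 / q - 1 / p by linarith] at h3
    exact mul_le_mul_of_nonneg_left h2 (by positivity)
  refine (ENNReal.ofReal_le_ofReal hreal).trans (le_of_eq ?_)
  rw [ENNReal.ofReal_mul (by positivity),
    ← ENNReal.ofReal_rpow_of_nonneg (by positivity) (by positivity),
    ENNReal.ofReal_sum_of_nonneg (fun i _ => by positivity),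
    ← ENNReal.ofReal_rpow_of_pos (by positivity),
    ENNReal.ofReal_pow (by norm_num), ENNReal.ofReal_ofNat, mul_comm]

/-- Bound for the pairing against a representation. -/
lemma aux_rep_bound {p q r p' q' r' : ℝ} (hp : 1 < p) (hpq : p < q) (hr : 1 < r)
    (hp' : 1 / p + 1 / p' = 1) (hq' : 1 / q + 1 / q' = 1) (hr' : 1 / r + 1 / r' = 1)
    (x y : ℤ → ℝ) (lam : ℕ × ℤ → ℝ) (a : ℕ × ℤ → ℤ → ℝ)
    (hb : ∀ jk : ℕ × ℤ, IsBlock p' q' jk.1 jk.2 (a jk))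
    (hs : ∀ n : ℤ, HasSum (fun jk : ℕ × ℤ => lam jk * a jk n) (y n)) :
    (∑' m : ℤ, ENNReal.ofReal |x m * y m|) ≤
      BMnorm p q r x * (∑' jk : ℕ × ℤ, ENNReal.ofReal (|lam jk| ^ r')) ^ (1 / r') := by
  have hr0 : (0 : ℝ) < r := by linarith
  have hp0 : (0 : ℝ) < p := by linarith
  have hr'1 : 1 < r' := aux_conj_gt_one hr hr'
  have hconj : r'.HolderConjugate r := Real.holderConjugate_iff.mpr ⟨hr'1, by rw [← one_div r', ← one_div r]; linarith⟩
  have step1 : ∀ m : ℤ, ENNReal.ofReal |x m * y m| ≤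
      ∑' jk : ℕ × ℤ, ENNReal.ofReal (|lam jk| * (|x m| * |a jk m|)) := by
    intro m
    have hsm := hs m
    have habs : Summable (fun jk : ℕ × ℤ => |lam jk| * |a jk m|) := by
      simpa [abs_mul] using summable_abs_iff.mpr hsm.summable
    have hym : |y m| ≤ ∑' jk : ℕ × ℤ, |lam jk| * |a jk m| := by
      rw [← hsm.tsum_eq]
      simpa [Real.norm_eq_abs, abs_mul] using
        norm_tsum_le_tsum_norm (f := fun jk : ℕ × ℤ => lam jk * a jk m)
          (by simpa [Real.norm_eq_abs, abs_mul] using habs)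
    calc ENNReal.ofReal |x m * y m| = ENNReal.ofReal (|x m| * |y m|) := by rw [abs_mul]
      _ ≤ ENNReal.ofReal (|x m| * ∑' jk : ℕ × ℤ, |lam jk| * |a jk m|) :=
          ENNReal.ofReal_le_ofReal (mul_le_mul_of_nonneg_left hym (abs_nonneg _))
      _ = ∑' jk : ℕ × ℤ, ENNReal.ofReal (|lam jk| * (|x m| * |a jk m|)) := by
          rw [ENNReal.ofReal_mul (abs_nonneg _),
            ENNReal.ofReal_tsum_of_nonneg
              (fun jk => mul_nonneg (abs_nonneg _) (abs_nonneg _)) habs,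
            ← ENNReal.tsum_mul_left]
          refine tsum_congr fun jk => ?_
          rw [← ENNReal.ofReal_mul (abs_nonneg _)]
          congr 1
          ring
  calc (∑' m : ℤ, ENNReal.ofReal |x m * y m|)
      ≤ ∑' m : ℤ, ∑' jk : ℕ × ℤ, ENNReal.ofReal (|lam jk| * (|x m| * |a jk m|)) :=
        ENNReal.tsum_le_tsum step1
    _ = ∑' jk : ℕ × ℤ, ∑' m : ℤ, ENNReal.ofReal (|lam jk| * (|x m| * |a jk m|)) :=
        ENNReal.tsum_comm
    _ = ∑' jk : ℕ × ℤ, ENNReal.ofReal |lam jk| *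
          ∑' m : ℤ, ENNReal.ofReal (|x m| * |a jk m|) := by
        refine tsum_congr fun jk => ?_
        rw [← ENNReal.tsum_mul_left]
        exact tsum_congr fun m => ENNReal.ofReal_mul (abs_nonneg _)
    _ ≤ ∑' jk : ℕ × ℤ, ENNReal.ofReal |lam jk| *
          (((2 : ℝ≥0∞) ^ jk.1) ^ (1 / q - 1 / p) *
            (∑ l ∈ dyadicI jk.1 jk.2, ENNReal.ofReal (|x l| ^ p)) ^ (1 / p)) :=
        ENNReal.tsum_le_tsum fun jk => by
          gcongr; exact (aux_block_pairing hp hpq hp' hq' x jk.1 jk.2 (a jk) (hb jk))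
    _ ≤ (∑' jk : ℕ × ℤ, (ENNReal.ofReal |lam jk|) ^ r') ^ (1 / r') *
          (∑' jk : ℕ × ℤ, (((2 : ℝ≥0∞) ^ jk.1) ^ (1 / q - 1 / p) *
            (∑ l ∈ dyadicI jk.1 jk.2, ENNReal.ofReal (|x l| ^ p)) ^ (1 / p)) ^ r) ^ (1 / r) :=
        aux_tsum_holder hconj _ _
    _ = BMnorm p q r x * (∑' jk : ℕ × ℤ, ENNReal.ofReal (|lam jk| ^ r')) ^ (1 / r') := by
        rw [mul_comm]
        congr 1
        · rw [BMnorm]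
          congr 1
          refine tsum_congr fun jk => ?_
          rw [ENNReal.mul_rpow_of_nonneg _ _ (by positivity), ← ENNReal.rpow_mul,
            ← ENNReal.rpow_mul, show (1 / q - 1 / p) * r = r * (1 / q - 1 / p) by ring,
            show (1 / p) * r = r / p by ring]
        · congr 1
          exact tsum_congr fun jk =>
            ENNReal.ofReal_rpow_of_nonneg (abs_nonneg _) (by linarith)

end Aux

/-- The pairing between `ℓ^p_{q,r}` and the block space `h^{p'}_{q',r'}` converges
absolutely and satisfies `|∑ x(m)y(m)| ≤ ‖x‖_{ℓ^p_{q,r}} ‖y‖_{h^{p'}_{q',r'}}`. -/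
theorem BM_block_pairing (p q r p' q' r' : ℝ) (hp : 1 < p) (hpq : p < q)
    (hr : 1 < r) (hp' : 1 / p + 1 / p' = 1) (hq' : 1 / q + 1 / q' = 1)
    (hr' : 1 / r + 1 / r' = 1) (x y : ℤ → ℝ)
    (hx : BMnorm p q r x ≠ ⊤) (hy : blockNorm p' q' r' y ≠ ⊤) :
    Summable (fun m : ℤ => |x m * y m|) ∧
    ENNReal.ofReal |∑' m : ℤ, x m * y m| ≤
      BMnorm p q r x * blockNorm p' q' r' y := by
  -- extract a representation with finite `ℓ^{r'}` norm
  have h1 : blockNorm p' q' r' y < ⊤ := hy.lt_top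
  rw [blockNorm] at h1
  obtain ⟨lam0, h1⟩ := iInf_lt_iff.mp h1
  obtain ⟨a0, h1⟩ := iInf_lt_iff.mp h1
  obtain ⟨hb0, h1⟩ := iInf_lt_iff.mp h1
  obtain ⟨hs0, hval0⟩ := iInf_lt_iff.mp h1
  have key0 := aux_rep_bound hp hpq hr hp' hq' hr' x y lam0 a0 hb0 hs0
  have hfin : (∑' m : ℤ, ENNReal.ofReal |x m * y m|) ≠ ⊤ :=
    ne_top_of_le_ne_top (ENNReal.mul_ne_top hx hval0.ne) key0
  have hsummable : Summable (fun m : ℤ => |x m * y m|) :=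
    (ENNReal.summable_toReal hfin).congr fun m => ENNReal.toReal_ofReal (abs_nonneg _)
  refine ⟨hsummable, ?_⟩
  have hT : ENNReal.ofReal |∑' m : ℤ, x m * y m| ≤ ∑' m : ℤ, ENNReal.ofReal |x m * y m| := by
    have h2 : |∑' m : ℤ, x m * y m| ≤ ∑' m : ℤ, |x m * y m| := by
      simp only [abs_mul]
      simpa [Real.norm_eq_abs, abs_mul] using
        norm_tsum_le_tsum_norm (f := fun m : ℤ => x m * y m)
          (by simpa [Real.norm_eq_abs, abs_mul] using hsummable)
    refine (ENNReal.ofReal_le_ofReal h2).trans (le_of_eq ?_)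
    exact ENNReal.ofReal_tsum_of_nonneg (fun m => abs_nonneg _) hsummable
  by_cases hC : BMnorm p q r x = 0
  · have hzero : (∑' m : ℤ, ENNReal.ofReal |x m * y m|) = 0 :=
      le_antisymm (key0.trans (by rw [hC, zero_mul])) bot_le
    calc ENNReal.ofReal |∑' m : ℤ, x m * y m| ≤ 0 := hT.trans hzero.le
      _ ≤ _ := bot_le
  · have hdiv : ENNReal.ofReal |∑' m : ℤ, x m * y m| / BMnorm p q r x ≤
        blockNorm p' q' r' y := by
      rw [blockNorm]
      refine le_iInf fun lam => le_iInf fun a => le_iInf fun hb => le_iInf fun hs => ?_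
      rw [ENNReal.div_le_iff_le_mul (Or.inl hC) (Or.inl hx), mul_comm]
      exact hT.trans (aux_rep_bound hp hpq hr hp' hq' hr' x y lam a hb hs)
    calc ENNReal.ofReal |∑' m : ℤ, x m * y m|
        = BMnorm p q r x * (ENNReal.ofReal |∑' m : ℤ, x m * y m| / BMnorm p q r x) :=
          (ENNReal.mul_div_cancel hC hx).symm
      _ ≤ BMnorm p q r x * blockNorm p' q' r' y := by gcongr
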